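/- Let G be a locally compact group with Haar measure m_G, f a continuous compactly supported symmetric nonnegative function with m_G(f) = 1, K = supp(f), and G → U(V) a unitary representation. Regard f as the self-adjoint averaging operator on V, with projection-valued measure P. Let αₙ = 1 − 2^{−n} and pₙ = P([αₙ, α_{n+1}]). Then for every v ∈ V and every n ≥ 4: sup_{k∈K} ‖(1 − k)pₙv‖ ≤ 2 sup_{k∈K} ‖(1 − k)f pₙ v‖. -/

import Mathlib

open MeasureTheory

set_option maxHeartbeats 1000000

private lemma complex_inner_re_symm {V : Type*} [NormedAddCommGroup V] [InnerProductSpace ℂ V]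
    (x y : V) : (inner ℂ x y : ℂ).re = (inner ℂ y x : ℂ).re := by
  exact inner_re_symm (𝕜 := ℂ) x y

private lemma complex_inner_self_re {V : Type*} [NormedAddCommGroup V] [InnerProductSpace ℂ V]
    (x : V) : (inner ℂ x x : ℂ).re = ‖x‖ ^ 2 := by
  exact inner_self_eq_norm_sq (𝕜 := ℂ) x

/-- Margulis' smoothing lemma: let `f ∈ 𝒜(G)` with support `K` act as the self-adjoint
averaging operator `A` on a unitary `G`-representation `V`, and let `p` be the spectral
projection of `A` for the window `[1 − 2⁻ⁿ, 1 − 2⁻⁽ⁿ⁺¹⁾]` (encoded by the quadratic-form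
bounds `hlow`, `hhigh`). Then for `n ≥ 4`,
`sup_{k∈K} ‖(1−k)pv‖ ≤ 2 sup_{k∈K} ‖(1−k)f pv‖`. -/
theorem spectral_window_smoothing
    {G : Type*} [Group G] [TopologicalSpace G] [IsTopologicalGroup G] [LocallyCompactSpace G]
    [MeasurableSpace G] [BorelSpace G]
    (μ : Measure G) [μ.IsHaarMeasure]
    {V : Type*} [NormedAddCommGroup V] [InnerProductSpace ℂ V] [CompleteSpace V]
    (π : G →* (V ≃ₗᵢ[ℂ] V))
    (f : G → ℝ) (hfc : Continuous f) (hfsupp : HasCompactSupport f)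
    (hf0 : ∀ g, 0 ≤ f g) (hfsymm : ∀ g : G, f g⁻¹ = f g) (hf1 : ∫ g, f g ∂μ = 1)
    (K : Set G) (hKsupp : K = tsupport f)
    (A : V →L[ℂ] V) (hAint : ∀ v : V, A v = ∫ g, f g • π g v ∂μ)
    (hAsa : IsSelfAdjoint A) (hAnorm : ‖A‖ ≤ 1)
    (n : ℕ) (hn : 4 ≤ n)
    (p : V →L[ℂ] V) (hpidem : p.comp p = p) (hpsa : IsSelfAdjoint p)
    (hcomm : A.comp p = p.comp A)
    (hlow : ∀ w : V,
      (1 - (2 : ℝ) ^ (-(n : ℤ))) * ‖p w‖ ^ 2 ≤ (inner ℂ (A (p w)) (p w) : ℂ).re)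
    (hhigh : ∀ w : V,
      (inner ℂ (A (p w)) (p w) : ℂ).re ≤ (1 - (2 : ℝ) ^ (-(n + 1 : ℤ))) * ‖p w‖ ^ 2)
    (v : V) (C : ℝ)
    (hC : ∀ k ∈ K, ‖A (p v) - π k (A (p v))‖ ≤ C) :
    ∀ k ∈ K, ‖p v - π k (p v)‖ ≤ 2 * C := by
  intro k hk
  have hC0 : 0 ≤ C := le_trans (norm_nonneg _) (hC k hk)
  set ε : ℝ := (2 : ℝ) ^ (-(n : ℤ)) with hε
  have hεpos : 0 < ε := by positivity
  have hεval : ε = ((2:ℝ) ^ n)⁻¹ := by rw [hε, zpow_neg, zpow_natCast]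
  have h2n : (16:ℝ) ≤ (2:ℝ) ^ n := by
    calc (16:ℝ) = 2 ^ 4 := by norm_num
    _ ≤ (2:ℝ) ^ n := by exact pow_le_pow_right₀ one_le_two hn
  have hε16 : ε ≤ 1/16 := by
    rw [hεval]
    rw [inv_le_comm₀ (by positivity) (by norm_num)]
    linarith
  have hhalf : (2:ℝ) ^ (-(n + 1 : ℤ)) = ε/2 := by
    rw [hε, show (-(n + 1 : ℤ)) = -(n:ℤ) + (-1 : ℤ) by ring,
      zpow_add₀ (two_ne_zero : (2:ℝ) ≠ 0), zpow_neg_one]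
    ring
  set u := p v with hu
  have hpu : p u = u := by
    have := congrArg (fun T : V →L[ℂ] V => T v) hpidem
    simpa using this
  have hcomm' : ∀ x : V, A (p x) = p (A x) := by
    intro x
    have := congrArg (fun T : V →L[ℂ] V => T x) hcomm
    simpa using this
  set B : V →L[ℂ] V := 1 - A with hB
  have hBapp : ∀ x : V, B x = x - A x := fun x => rfl
  have hBsa : IsSelfAdjoint B := (IsSelfAdjoint.one (R := V →L[ℂ] V)).sub hAsa
  have hBsym : ∀ x y : V, (inner ℂ (B x) y : ℂ) = inner ℂ x (B y) := fun x y => hBsa.isSymmetric x y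
  have hpB : ∀ x : V, p (B x) = B (p x) := by
    intro x
    simp only [hBapp, map_sub, hcomm']
  -- quadratic form bounds for B on the range of p
  have hre : ∀ x : V, (inner ℂ (B x) x : ℂ).re = ‖x‖^2 - (inner ℂ (A x) x : ℂ).re := by
    intro x
    rw [hBapp, inner_sub_left]
    have : (inner ℂ x x : ℂ).re = ‖x‖^2 := by
      rw [← RCLike.re_eq_complex_re]
      exact inner_self_eq_norm_sq (𝕜 := ℂ) x
    rw [Complex.sub_re, this]
  have hq0 : ∀ w : V, (ε/2) * ‖p w‖ ^ 2 ≤ (inner ℂ (B (p w)) (p w) : ℂ).re := by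
    intro w
    have h := hhigh w
    rw [hhalf] at h
    rw [hre]
    linarith
  have hq1 : ∀ w : V, (inner ℂ (B (p w)) (p w) : ℂ).re ≤ ε * ‖p w‖ ^ 2 := by
    intro w
    have h := hlow w
    rw [hre]
    linarith
  -- Cauchy-Schwarz / discriminant argument: ‖B u‖ ≤ ε ‖u‖
  set b := B u with hb
  have hpb : p b = b := by rw [hb, hpB, hpu]
  have hts : ∀ (t : ℝ) (x : V), t • x = ((t:ℂ)) • x := by
    intro t x
    rw [← algebraMap_smul ℂ t x]
    norm_num
  have hquad : ∀ t : ℝ,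
      0 ≤ ((inner ℂ (B b) b : ℂ).re) * (t * t) + (-(2 * ‖b‖^2)) * t + (inner ℂ b u : ℂ).re := by
    intro t
    have hw : p (u - t • b) = u - t • b := by
      rw [hts t b, map_sub, hpu, _root_.map_smul, hpb]
    have h0 := hq0 (u - t • b)
    rw [hw] at h0
    have h0' : 0 ≤ (inner ℂ (B (u - t • b)) (u - t • b) : ℂ).re := by
      have : 0 ≤ (ε/2) * ‖u - t • b‖ ^ 2 := by positivity
      linarith
    have hexp : (inner ℂ (B (u - t • b)) (u - t • b) : ℂ).re
        = ((inner ℂ (B b) b : ℂ).re) * (t * t) + (-(2 * ‖b‖^2)) * t + (inner ℂ b u : ℂ).re := by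
      have hBu : B (u - t • b) = b - (t:ℂ) • B b := by
        rw [map_sub, hts t b, _root_.map_smul, ← hb]
      have hcross1 : (inner ℂ (B b) u : ℂ) = inner ℂ b b := by
        rw [hBsym b u, ← hb]
      have hcross2 : (inner ℂ b (B b) : ℂ).re = (inner ℂ (B b) b : ℂ).re := complex_inner_re_symm _ _
      have hbu : (inner ℂ u b : ℂ).re = (inner ℂ b u : ℂ).re := complex_inner_re_symm _ _
      rw [hBu, hts t b, inner_sub_left, inner_sub_right, inner_sub_right,
        inner_smul_left, inner_smul_right, inner_smul_left, inner_smul_right, hcross1]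
      have hbb : (inner ℂ b b : ℂ).re = ‖b‖^2 := by
        rw [← RCLike.re_eq_complex_re]
        exact inner_self_eq_norm_sq b
      simp only [Complex.sub_re, Complex.mul_re, Complex.conj_re, Complex.conj_im,
        Complex.ofReal_re, Complex.ofReal_im]
      have hbbim : (inner ℂ b b : ℂ).im = 0 := by
        rw [inner_self_eq_norm_sq_to_K]
        simp [← Complex.ofReal_pow]
      rw [hbbim, hbb] at *
      nlinarith [hbu, hcross2, hbb]
    rw [hexp] at h0'
    exact h0'
  have hdisc : (-(2 * ‖b‖^2))^2 - 4 * ((inner ℂ (B b) b : ℂ).re) * ((inner ℂ b u : ℂ).re) ≤ 0 := by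
    have := discrim_le_zero hquad
    rwa [discrim] at this
  have hqb : (inner ℂ (B b) b : ℂ).re ≤ ε * ‖b‖^2 := by
    have := hq1 b
    rwa [hpb] at this
  have hqu : (inner ℂ b u : ℂ).re ≤ ε * ‖u‖^2 := by
    have := hq1 v
    rw [← hu] at this
    rw [hb]
    exact this
  have hqb0 : 0 ≤ (inner ℂ (B b) b : ℂ).re := by
    have := hq0 b
    rw [hpb] at this
    nlinarith [sq_nonneg ‖b‖]
  have hqu0 : 0 ≤ (inner ℂ b u : ℂ).re := by
    have := hq0 v
    rw [← hu] at this
    rw [hb]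
    nlinarith [sq_nonneg ‖u‖]
  have hbu_le : ‖b‖ ≤ ε * ‖u‖ := by
    by_contra hcon
    push_neg at hcon
    have h1 : ‖b‖^2 * ‖b‖^2 ≤ (ε * ‖b‖^2) * (ε * ‖u‖^2) := by
      nlinarith [hdisc, mul_le_mul hqb hqu hqu0 (by positivity : (0:ℝ) ≤ ε * ‖b‖^2)]
    have hbpos : 0 < ‖b‖ := lt_of_le_of_lt (by positivity) hcon
    have hsq : (ε*‖u‖)*(ε*‖u‖) < ‖b‖*‖b‖ := mul_self_lt_mul_self (by positivity) hcon
    have h2 : ‖b‖^2 * ((ε*‖u‖)*(ε*‖u‖)) < ‖b‖^2 * (‖b‖*‖b‖) :=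
      mul_lt_mul_of_pos_left hsq (by positivity)
    nlinarith [h1, h2]
  -- now the integral argument
  by_cases hI : Integrable (fun g => f g • π g u) μ
  · -- main case
    set M := C + 2 * (ε * ‖u‖) with hM
    have hM0 : 0 ≤ M := by positivity
    have hg_norm : ∀ g ∈ K, ‖u - π g u‖ ≤ M := by
      intro g hg
      have e1 : u - π g u = (A u - π g (A u)) + ((u - A u) - π g (u - A u)) := by
        rw [map_sub]
        abel
      have h2 : ‖(u - A u) - π g (u - A u)‖ ≤ 2 * (ε * ‖u‖) := by
        have := norm_sub_le (u - A u) (π g (u - A u))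
        rw [(π g).norm_map] at this
        have hbA : ‖u - A u‖ ≤ ε * ‖u‖ := by
          have : b = u - A u := hBapp u
          rwa [this] at hbu_le
        linarith
      calc ‖u - π g u‖ = ‖(A u - π g (A u)) + ((u - A u) - π g (u - A u))‖ := by rw [← e1]
        _ ≤ ‖A u - π g (A u)‖ + ‖(u - A u) - π g (u - A u)‖ := norm_add_le _ _
        _ ≤ C + 2 * (ε * ‖u‖) := add_le_add (hC g hg) h2
    have hfint : Integrable f μ := hfc.integrable_of_hasCompactSupport hfsupp
    have hiint : Integrable (fun g => (inner ℂ u (f g • π g u) : ℂ)) μ := hI.const_inner u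
    have hptwise : ∀ g, (inner ℂ u (f g • π g u) : ℂ) = (f g : ℂ) * (inner ℂ u (π g u) : ℂ) := by
      intro g
      rw [← algebraMap_smul ℂ (f g) (π g u), inner_smul_right]
      norm_num
    have key2 : (inner ℂ u (A u) : ℂ).re = ∫ g, f g * (inner ℂ u (π g u) : ℂ).re ∂μ := by
      have key : (inner ℂ u (A u) : ℂ) = ∫ g, (inner ℂ u (f g • π g u) : ℂ) ∂μ := by
        rw [hAint u, integral_inner hI]
      rw [key]
      have h2 : (∫ g, (inner ℂ u (f g • π g u) : ℂ) ∂μ).re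
          = ∫ g, (inner ℂ u (f g • π g u) : ℂ).re ∂μ := by
        rw [← RCLike.re_eq_complex_re, ← integral_re hiint]
      rw [h2]
      congr 1
      ext g
      rw [hptwise g]
      simp [Complex.mul_re]
    have hreint : Integrable (fun g => f g * (inner ℂ u (π g u) : ℂ).re) μ := by
      have h := hiint.re
      simp only [RCLike.re_eq_complex_re] at h
      have heq : ∀ g, (inner ℂ u (f g • π g u) : ℂ).re = f g * (inner ℂ u (π g u) : ℂ).re := by
        intro g
        rw [hptwise g]
        simp [Complex.mul_re]
      simp only [heq] at h
      exact h
    have hnorm_id : ∀ g, f g * ((1/2) * ‖u - π g u‖^2)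
        = f g * ‖u‖^2 - f g * (inner ℂ u (π g u) : ℂ).re := by
      intro g
      have hnm : ‖π g u‖ = ‖u‖ := (π g).norm_map u
      have hid := @norm_sub_sq ℂ V _ _ _ u (π g u)
      rw [hnm] at hid
      have : RCLike.re (inner ℂ u (π g u) : ℂ) = (inner ℂ u (π g u) : ℂ).re := rfl
      rw [this] at hid
      linear_combination (f g / 2) * hid
    have hintLHS : Integrable (fun g => f g * ((1/2) * ‖u - π g u‖^2)) μ := by
      have heq : (fun g => f g * ((1/2) * ‖u - π g u‖^2))
          = fun g => f g * ‖u‖^2 - f g * (inner ℂ u (π g u) : ℂ).re := by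
        ext g; exact hnorm_id g
      rw [heq]
      exact (hfint.mul_const _).sub hreint
    have hmono : ∫ g, f g * ((1/2) * ‖u - π g u‖^2) ∂μ ≤ ∫ g, f g * ((1/2) * M^2) ∂μ := by
      apply integral_mono hintLHS (hfint.mul_const _)
      intro g
      by_cases hgK : g ∈ K
      · have h := hg_norm g hgK
        have : ‖u - π g u‖^2 ≤ M^2 := pow_le_pow_left₀ (norm_nonneg _) h 2
        have h2 : (1/2) * ‖u - π g u‖^2 ≤ (1/2) * M^2 := by nlinarith [this]
        exact mul_le_mul_of_nonneg_left h2 (hf0 g)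
      · have hz : f g = 0 := by
          rw [hKsupp] at hgK
          exact image_eq_zero_of_notMem_tsupport hgK
        simp [hz]
    have hRHSval : ∫ g, f g * ((1/2) * M^2) ∂μ = (1/2) * M^2 := by
      rw [integral_mul_const, hf1, one_mul]
    have hLHSval : ∫ g, f g * ((1/2) * ‖u - π g u‖^2) ∂μ
        = ‖u‖^2 - (inner ℂ u (A u) : ℂ).re := by
      have heq : (fun g => f g * ((1/2) * ‖u - π g u‖^2))
          = fun g => f g * ‖u‖^2 - f g * (inner ℂ u (π g u) : ℂ).re := by
        ext g; exact hnorm_id g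
      rw [heq, integral_sub (hfint.mul_const _) hreint, integral_mul_const, hf1, one_mul, key2]
    have hlow2 : (ε/2) * ‖u‖^2 ≤ ‖u‖^2 - (inner ℂ u (A u) : ℂ).re := by
      have h := hq0 v
      rw [← hu] at h
      have : (inner ℂ (B u) u : ℂ).re = ‖u‖^2 - (inner ℂ (A u) u : ℂ).re := hre u
      rw [this] at h
      have hsym : (inner ℂ u (A u) : ℂ).re = (inner ℂ (A u) u : ℂ).re := complex_inner_re_symm _ _
      linarith
    have hfinal : ε * ‖u‖^2 ≤ M^2 := by
      have h5 := hmono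
      rw [hRHSval, hLHSval] at h5
      nlinarith [hlow2, h5]
    -- extract ‖u‖ ≤ √(ε⁻¹) M and conclude
    set s : ℝ := Real.sqrt (ε⁻¹) with hs
    have hu_le : ‖u‖ ≤ s * M := by
      have h1 : ‖u‖^2 ≤ ε⁻¹ * M^2 := by
        have := mul_le_mul_of_nonneg_left hfinal (le_of_lt (inv_pos.mpr hεpos))
        calc ‖u‖^2 = ε⁻¹ * (ε * ‖u‖^2) := by field_simp
          _ ≤ ε⁻¹ * M^2 := this
      calc ‖u‖ = Real.sqrt (‖u‖^2) := (Real.sqrt_sq (norm_nonneg u)).symm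
        _ ≤ Real.sqrt (ε⁻¹ * M^2) := Real.sqrt_le_sqrt h1
        _ = s * M := by
            rw [Real.sqrt_mul (by positivity), Real.sqrt_sq hM0]
    have hεs : ε * s ≤ 1/4 := by
      have hsle : s ≤ (2:ℝ)^n / 4 := by
        have h1 : ε⁻¹ ≤ ((2:ℝ)^n / 4)^2 := by
          rw [hεval, inv_inv]
          have : ((2:ℝ)^n / 4)^2 = (2:ℝ)^n * ((2:ℝ)^n / 16) := by ring
          rw [this]
          nlinarith [h2n]
        calc s ≤ Real.sqrt (((2:ℝ)^n / 4)^2) := Real.sqrt_le_sqrt h1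
          _ = (2:ℝ)^n / 4 := Real.sqrt_sq (by positivity)
      calc ε * s ≤ ε * ((2:ℝ)^n / 4) := by
            exact mul_le_mul_of_nonneg_left hsle (le_of_lt hεpos)
        _ = 1/4 := by rw [hεval]; field_simp
    have hkey : 2 * (ε * ‖u‖) ≤ C := by
      have h1 : 2 * (ε * ‖u‖) ≤ 2 * ε * (s * M) := by
        have := mul_le_mul_of_nonneg_left hu_le (by positivity : (0:ℝ) ≤ 2 * ε)
        nlinarith
      have h2 : 2 * ε * (s * M) = 2 * (ε * s) * (C + 2 * (ε * ‖u‖)) := by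
        rw [hM]; ring
      have hx0 : 0 ≤ ε * ‖u‖ := by positivity
      have hεs0 : 0 ≤ ε * s := by
        have : 0 ≤ s := Real.sqrt_nonneg _
        positivity
      nlinarith [hεs, hC0]
    have := hg_norm k hk
    rw [hM] at this
    linarith
  · -- degenerate case: the integral does not exist, so A u = 0 and u = 0
    have hA0 : A u = 0 := by
      rw [hAint u, integral_undef hI]
    have h := hlow v
    rw [← hu, hA0] at h
    simp only [inner_zero_left, Complex.zero_re] at h
    have hcoef : 0 < 1 - ε := by
      have h16 : ε ≤ 1/16 := hε16
      linarith
    have hu0 : u = 0 := by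
      have hsq : ‖u‖^2 ≤ 0 := by
        rcases le_or_gt (‖u‖^2) 0 with h' | h'
        · exact h'
        · exfalso
          have := mul_pos hcoef h'
          linarith
      have h2 := sq_nonneg ‖u‖
      have hnz : ‖u‖ = 0 := by
        have : ‖u‖^2 = 0 := le_antisymm hsq h2
        exact sq_eq_zero_iff.mp this
      exact norm_eq_zero.mp hnz
    rw [hu0]
    have : ‖(0:V) - π k 0‖ = 0 := by simp
    rw [this]
    positivity
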